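/- arXiv:2603.05702 — 2 statements merged into one kernel-verified Lean document; each statement's English description precedes it below -/
import Mathlib

section
/- Let A be an n-by-n skew-symmetric matrix over a field K and v ∈ Kⁿ. Then the set system D = ([n], 𝓑) with 𝓑 = { I ⊆ [n] : (A + v vᵀ)[I] is nonsingular } is a strong Δ-matroid (in particular 𝓑 is nonempty, since it contains ∅ by the convention det of the empty matrix is 1). -/
open Matrix
open scoped symmDiff

/-- The principal submatrix of `M` on the index set `I` (with `det (psub M ∅) = 1`). -/
def psub {m : Type*} {K : Type*} (M : Matrix m m K) (I : Finset m) :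
    Matrix I I K := fun i j => M i.1 j.1

/-- `(E, 𝓑)` is a strong Δ-matroid. -/
def IsStrongDeltaMatroid {α : Type*} [DecidableEq α] (E : Finset α) (B : Set (Finset α)) : Prop :=
  (B.Nonempty ∧ (∀ b ∈ B, b ⊆ E) ∧
      ∀ b ∈ B, ∀ b' ∈ B, ∀ x ∈ b ∆ b', ∃ y ∈ b ∆ b', b ∆ ({x, y} : Finset α) ∈ B) ∧
    ∀ b ∈ B, ∀ b' ∈ B, ∀ x ∈ b ∆ b', ∃ y ∈ b ∆ b',
      b ∆ ({x, y} : Finset α) ∈ B ∧ b' ∆ ({x, y} : Finset α) ∈ B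

set_option linter.unusedSectionVars false

namespace DM
variable {m : Type*} [Fintype m] [DecidableEq m] {K : Type*} [Field K]
noncomputable def dd (M : Matrix m m K) (S : Finset m) : K := (psub M S).det
def RowSel (M : Matrix m m K) (S : Finset m) : Matrix m m K :=
  fun i j => if i ∈ S then M i j else (1 : Matrix m m K) i j
def CoSel (M : Matrix m m K) (S : Finset m) : Matrix m m K :=
  fun i j => if i ∈ S then (1 : Matrix m m K) i j else M i j
noncomputable def pivot (M : Matrix m m K) (S : Finset m) : Matrix m m K :=
  CoSel M S * (RowSel M S)⁻¹
lemma det_RowSel (M : Matrix m m K) (S : Finset m) : (RowSel M S).det = dd M S := by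
  classical
  let e := Equiv.sumCompl (· ∈ S)
  have h : (RowSel M S).submatrix e e =
      fromBlocks (psub M S) (Matrix.of fun i j => M i.1 j.1) 0 (1 : Matrix {x // ¬ x ∈ S} {x // ¬ x ∈ S} K) := by
    ext i j
    cases i with
    | inl i => cases j with
      | inl j => simp [RowSel, e, psub, i.2]
      | inr j => simp [RowSel, e, i.2]
    | inr i => cases j with
      | inl j =>
        have : i.1 ≠ j.1 := fun h => i.2 (h ▸ j.2)
        simp [RowSel, e, i.2, one_apply, this]
      | inr j =>
        simp [RowSel, e, i.2, one_apply, Subtype.ext_iff]; exact if_congr Iff.rfl rfl rfl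
  rw [← Matrix.det_submatrix_equiv_self e, h, det_fromBlocks_zero₂₁, det_one, mul_one]; rfl


lemma RowSel_pivot_mul (M : Matrix m m K) (I S : Finset m) (hI : IsUnit (RowSel M I).det) :
    RowSel (pivot M I) S * RowSel M I = RowSel M (I ∆ S) := by
  have hmul : pivot M I * RowSel M I = CoSel M I := by
    rw [pivot, Matrix.mul_assoc, Matrix.nonsing_inv_mul _ hI, Matrix.mul_one]
  ext i j
  by_cases hiS : i ∈ S
  · have h1 : (RowSel (pivot M I) S * RowSel M I) i j = (pivot M I * RowSel M I) i j := by
      simp [mul_apply, RowSel, hiS]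
    rw [h1, hmul]
    by_cases hiI : i ∈ I
    · have : i ∉ I ∆ S := by simp [Finset.mem_symmDiff, hiI, hiS]
      simp [CoSel, RowSel, hiI, this]
    · have : i ∈ I ∆ S := by simp [Finset.mem_symmDiff, hiI, hiS]
      simp [CoSel, RowSel, hiI, this]
  · have h1 : (RowSel (pivot M I) S * RowSel M I) i j = ((1 : Matrix m m K) * RowSel M I) i j := by
      simp [mul_apply, RowSel, hiS]
    rw [h1, Matrix.one_mul]
    by_cases hiI : i ∈ I
    · have : i ∈ I ∆ S := by simp [Finset.mem_symmDiff, hiI, hiS]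
      simp [RowSel, hiI, this]
    · have : i ∉ I ∆ S := by simp [Finset.mem_symmDiff, hiI, hiS]
      simp [RowSel, hiI, this]

lemma dd_pivot (M : Matrix m m K) (I : Finset m) (hI : dd M I ≠ 0) (S : Finset m) :
    dd (pivot M I) S * dd M I = dd M (I ∆ S) := by
  have hI' : IsUnit (RowSel M I).det := by
    rw [det_RowSel]; exact (Ne.isUnit hI)
  have := congrArg Matrix.det (RowSel_pivot_mul M I S hI')
  rwa [det_mul, det_RowSel, det_RowSel, det_RowSel] at this

lemma dd_pivot_ne (M : Matrix m m K) (I : Finset m) (hI : dd M I ≠ 0) (S : Finset m) :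
    dd (pivot M I) S ≠ 0 ↔ dd M (I ∆ S) ≠ 0 := by
  rw [← dd_pivot M I hI S]
  exact ⟨fun h => mul_ne_zero h hI, fun h => left_ne_zero_of_mul h⟩

def IsAlt (M : Matrix m m K) : Prop := (∀ i j, M j i = - M i j) ∧ ∀ i, M i i = 0

lemma IsAlt.psub {M : Matrix m m K} (h : IsAlt M) (S : Finset m) : IsAlt (psub M S) :=
  ⟨fun i j => h.1 i.1 j.1, fun i => h.2 i.1⟩

lemma IsAlt.quad {N : Matrix m m K} (h : IsAlt N) (x : m → K) :
    ∑ a, ∑ b, x a * N a b * x b = 0 := by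
  rw [← Finset.sum_product']
  refine Finset.sum_involution (fun p _ => (p.2, p.1)) ?_ ?_ (fun p _ => Finset.mem_univ _) ?_
  · intro p _
    have := h.1 p.1 p.2
    simp only []
    ring_nf
    rw [this]; ring
  · intro p _ hf
    intro hp
    have h1 : p.1 = p.2 := (congrArg Prod.snd hp : p.1 = p.2)
    apply hf
    rw [h1, h.2]; ring
  · intro p _; rfl

lemma IsAlt.transpose_eq {N : Matrix m m K} (h : IsAlt N) : Nᵀ = -N := by
  ext i j; simp [transpose_apply, h.1 j i]

lemma IsAlt.conj {N : Matrix m m K} (h : IsAlt N) (P : Matrix m m K) : IsAlt (Pᵀ * N * P) := by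
  have ht : (Pᵀ * N * P)ᵀ = -(Pᵀ * N * P) := by
    rw [transpose_mul, transpose_mul, transpose_transpose, h.transpose_eq]
    simp [Matrix.mul_assoc]
  constructor
  · intro i j
    have := congrFun (congrFun ht i) j
    simpa [transpose_apply] using this
  · intro i
    have hq := h.quad (fun a => P a i)
    rw [← hq]
    rw [mul_apply]
    rw [Finset.sum_comm]
    apply Finset.sum_congr rfl
    intro b _
    rw [mul_apply, Finset.sum_mul]
    apply Finset.sum_congr rfl
    intro a _
    simp only [transpose_apply]


lemma csel_entry (M : Matrix m m K) (I : Finset m) (j k : m) :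
    ((RowSel M I)ᵀ * CoSel M I) j k
      = (if k ∈ I then M k j else 0) + (if j ∈ I then 0 else M j k) := by
  rw [mul_apply]
  have h1 : ∀ i, (RowSel M I)ᵀ j i * CoSel M I i k
      = (if i ∈ I then (if i = k then M i j else 0) else (if i = j then M i k else 0)) := by
    intro i
    by_cases hi : i ∈ I
    · simp [RowSel, CoSel, transpose_apply, hi, one_apply, mul_ite]
    · by_cases hij : i = j
      · subst hij; simp [RowSel, CoSel, hi, one_apply]
      · simp [RowSel, CoSel, hi, hij, one_apply]
  rw [Finset.sum_congr rfl (fun i _ => h1 i), Finset.sum_ite,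
    Finset.sum_ite_eq' _ k (fun i => M i j), Finset.sum_ite_eq' _ j (fun i => M i k)]
  simp

lemma IsAlt.rowsel_cosel {M : Matrix m m K} (hM : IsAlt M) (I : Finset m) :
    IsAlt ((RowSel M I)ᵀ * CoSel M I) := by
  constructor
  · intro j k
    rw [csel_entry, csel_entry]
    by_cases hj : j ∈ I <;> by_cases hk : k ∈ I <;>
      simp [hj, hk, hM.1 k j]
  · intro j
    rw [csel_entry]
    by_cases hj : j ∈ I <;> simp [hj, hM.2 j]

lemma IsAlt.pivot {M : Matrix m m K} (hM : IsAlt M) {I : Finset m} (hI : dd M I ≠ 0) :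
    IsAlt (pivot M I) := by
  set C := RowSel M I with hCdef
  have hC : IsUnit C.det := by rw [hCdef, det_RowSel]; exact hI.isUnit
  have h2 : (C⁻¹)ᵀ * (Cᵀ * CoSel M I) = CoSel M I := by
    rw [← Matrix.mul_assoc, ← transpose_mul, Matrix.mul_nonsing_inv _ hC, transpose_one,
      Matrix.one_mul]
  have key : DM.pivot M I = (C⁻¹)ᵀ * (Cᵀ * CoSel M I) * C⁻¹ := by
    rw [h2]; rfl
  rw [key]
  exact (hM.rowsel_cosel I).conj _

lemma pivot_univ (B : Matrix m m K) : pivot B Finset.univ = B⁻¹ := by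
  have h1 : CoSel B Finset.univ = 1 := by ext i j; simp [CoSel]
  have h2 : RowSel B Finset.univ = B := by ext i j; simp [RowSel]
  rw [pivot, h1, h2, Matrix.one_mul]


lemma dd_univ (B : Matrix m m K) : dd B Finset.univ = B.det := by
  let e : {x // x ∈ (Finset.univ : Finset m)} ≃ m := Equiv.subtypeUnivEquiv (fun x => Finset.mem_univ x)
  rw [← Matrix.det_submatrix_equiv_self e B]
  rfl

lemma IsAlt.det_eq_zero {M : Matrix m m K} (hM : IsAlt M) (hodd : Odd (Fintype.card m)) :
    M.det = 0 := by
  by_cases h2 : (2 : K) = 0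
  · have h1 : ∀ x : K, -x = x := by
      intro x; rw [neg_eq_iff_add_eq_zero, ← two_mul, h2, zero_mul]
    have hplus : ∀ x : K, x + x = 0 := fun x => neg_eq_iff_add_eq_zero.mp (h1 x)
    rw [Matrix.det_apply]
    refine Finset.sum_involution (fun σ _ => σ⁻¹) ?_ ?_ (fun σ _ => Finset.mem_univ _) ?_
    · intro σ _
      have hfix : Equiv.Perm.sign σ⁻¹ • ∏ i, M (σ⁻¹ i) i = Equiv.Perm.sign σ • ∏ i, M (σ i) i := by
        rw [Equiv.Perm.sign_inv]
        congr 1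
        have hc := Equiv.prod_comp σ (fun i => M (σ⁻¹ i) i)
        rw [← hc]
        apply Finset.prod_congr rfl
        intro j _
        simp only [Equiv.Perm.inv_def, Equiv.symm_apply_apply]
        rw [hM.1 j (σ j)]
        exact (h1 _).symm
      show _ + Equiv.Perm.sign σ⁻¹ • ∏ i, M (σ⁻¹ i) i = 0
      rw [hfix]
      exact hplus _
    · intro σ _ hne heq
      apply hne
      by_cases hfb : ∃ i, σ i = i
      · obtain ⟨i, hi⟩ := hfb
        have hz : ∏ i, M (σ i) i = 0 := by
          apply Finset.prod_eq_zero (Finset.mem_univ i)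
          rw [hi, hM.2]
        rw [hz, smul_zero]
      · push_neg at hfb
        exfalso
        have heq' : σ⁻¹ = σ := heq
        have hinv : ∀ i, σ (σ i) = i := by
          intro i
          nth_rewrite 1 [← heq']
          exact σ.symm_apply_apply i
        have hsum : ∑ _x ∈ (Finset.univ : Finset m), (1 : ZMod 2) = 0 := by
          refine Finset.sum_involution (fun i _ => σ i) (fun i _ => by decide)
            (fun i _ _ => hfb i) (fun i _ => Finset.mem_univ _) (fun i _ => hinv i)
        have hcard : ((Fintype.card m : ℕ) : ZMod 2) = 0 := by
          rw [Fintype.card, Finset.card_eq_sum_ones]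
          push_cast
          simpa using hsum
        rw [ZMod.natCast_eq_zero_iff] at hcard
        exact (Nat.not_even_iff_odd.mpr hodd) (even_iff_two_dvd.mpr hcard)
    · intro σ _; simp
  · have hdet : M.det = -M.det := by
      conv_lhs => rw [← Matrix.det_transpose, hM.transpose_eq]
      rw [Matrix.det_neg, Odd.neg_one_pow hodd]
      ring
    have h0 : (2 : K) * M.det = 0 := by linear_combination hdet
    rcases mul_eq_zero.mp h0 with h | h
    · exact absurd h h2
    · exact h


lemma dd_pair (N : Matrix m m K) {a b : m} (hab : a ≠ b) :
    dd N {a, b} = N a a * N b b - N a b * N b a := by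
  have ha : a ∈ ({a, b} : Finset m) := by simp
  have hb : b ∈ ({a, b} : Finset m) := by simp
  let e : Fin 2 ≃ {x // x ∈ ({a, b} : Finset m)} :=
    { toFun := ![⟨a, ha⟩, ⟨b, hb⟩]
      invFun := fun c => if c.1 = a then 0 else 1
      left_inv := by
        intro i
        fin_cases i
        · simp
        · simp [Ne.symm hab]
      right_inv := by
        intro c
        have hc := c.2
        simp only [Finset.mem_insert, Finset.mem_singleton] at hc
        show ![(⟨a, ha⟩ : {x // x ∈ ({a, b} : Finset m)}), ⟨b, hb⟩]
          (if (c : m) = a then 0 else 1) = c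
        by_cases hca : (c : m) = a
        · rw [if_pos hca]
          simp only [Matrix.cons_val_zero]
          exact Subtype.ext hca.symm
        · rw [if_neg hca]
          have hcb : (c : m) = b := hc.resolve_left hca
          simp only [Matrix.cons_val_one, Matrix.head_cons]
          exact Subtype.ext hcb.symm }
  rw [dd, ← Matrix.det_submatrix_equiv_self e, Matrix.det_fin_two]
  simp [e, psub, Matrix.submatrix_apply]

lemma dd_psub_image {M : Matrix m m K} {T : Finset m} (S' : Finset {x // x ∈ T}) :
    dd (psub M T) S' = dd M (S'.image Subtype.val) := by
  classical
  have hmem : ∀ x : m, x ∈ S'.image Subtype.val → x ∈ T := by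
    intro x hx
    obtain ⟨y, _, rfl⟩ := Finset.mem_image.mp hx
    exact y.2
  let e : {y // y ∈ S'} ≃ {x // x ∈ S'.image Subtype.val} :=
    { toFun := fun y => ⟨y.1.1, Finset.mem_image.mpr ⟨y.1, y.2, rfl⟩⟩
      invFun := fun x => ⟨⟨x.1, hmem x.1 x.2⟩, by
        obtain ⟨y, hy, hyx⟩ := Finset.mem_image.mp x.2
        have : (⟨x.1, hmem x.1 x.2⟩ : {x // x ∈ T}) = y := Subtype.ext hyx.symm
        rw [this]; exact hy⟩
      left_inv := fun y => by ext; rfl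
      right_inv := fun x => by ext; rfl }
  rw [dd, dd, ← Matrix.det_submatrix_equiv_self e]
  rfl


lemma core_exchange {M : Matrix m m K} (hM : IsAlt M) {I J : Finset m}
    (hI : dd M I ≠ 0) (hJ : dd M J ≠ 0) {x : m} (hx : x ∈ I ∆ J) :
    ∃ y ∈ I ∆ J, y ≠ x ∧ dd M (I ∆ {x, y}) ≠ 0 ∧ dd M (J ∆ {x, y}) ≠ 0 := by
  classical
  set M' := pivot M I with hM'def
  have hM' : IsAlt M' := hM.pivot hI
  have hpiv : ∀ S, dd M' S ≠ 0 ↔ dd M (I ∆ S) ≠ 0 := dd_pivot_ne M I hI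
  set T := I ∆ J with hTdef
  have hT : dd M' T ≠ 0 := (hpiv T).mpr (by rwa [symmDiff_symmDiff_cancel_left])
  set B := psub M' T with hBdef
  have hBalt : IsAlt B := hM'.psub T
  have hBdet : B.det ≠ 0 := hT
  have hBinv : B * B⁻¹ = 1 := Matrix.mul_nonsing_inv _ hBdet.isUnit
  set x' : {a // a ∈ T} := ⟨x, hx⟩ with hx'def
  have hsum : ∑ y, B x' y * B⁻¹ y x' = 1 := by
    rw [← Matrix.mul_apply, hBinv, Matrix.one_apply_eq]
  have hex : ∃ y', B x' y' * B⁻¹ y' x' ≠ 0 := by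
    by_contra h
    push_neg at h
    rw [Finset.sum_eq_zero (fun y _ => h y)] at hsum
    exact one_ne_zero hsum.symm
  obtain ⟨y', hy'⟩ := hex
  have hB1 : B x' y' ≠ 0 := left_ne_zero_of_mul hy'
  have hB2 : B⁻¹ y' x' ≠ 0 := right_ne_zero_of_mul hy'
  have hxy : y' ≠ x' := fun h => hB1 (by rw [h]; exact hBalt.2 x')
  have hxy1 : x ≠ y'.1 := fun h => hxy (Subtype.ext h.symm)
  refine ⟨y'.1, y'.2, fun h => hxy (Subtype.ext h), ?_, ?_⟩
  · rw [← hpiv ({x, y'.1} : Finset m)]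
    rw [dd_pair M' hxy1]
    have hcalc : M' x x * M' y'.1 y'.1 - M' x y'.1 * M' y'.1 x = B x' y' * B x' y' := by
      rw [hM'.2 x, hM'.2 y'.1]
      have e2 : M' y'.1 x = -M' x y'.1 := hM'.1 x y'.1
      rw [e2]
      have e1 : M' x y'.1 = B x' y' := rfl
      rw [e1]; ring
    rw [hcalc]
    exact mul_ne_zero hB1 hB1
  · have h1 : I ∆ T = J := by rw [hTdef, symmDiff_symmDiff_cancel_left]
    have hJset : J ∆ ({x, y'.1} : Finset m) = I ∆ (T ∆ {x, y'.1}) := by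
      conv_lhs => rw [← h1]
      exact symmDiff_assoc I T _
    rw [hJset, ← hpiv (T ∆ {x, y'.1})]
    have himg : Finset.image Subtype.val
        ((Finset.univ : Finset {a // a ∈ T}) ∆ ({x', y'} : Finset {a // a ∈ T}))
        = T ∆ {x, y'.1} := by
      rw [Finset.image_symmDiff _ _ Subtype.val_injective]
      congr 1
      · rw [Finset.univ_eq_attach, Finset.attach_image_val]
      · simp [Finset.image_insert, Finset.image_singleton, hx'def]
    rw [← himg, ← dd_psub_image, ← hBdef]
    have hBuniv : dd B Finset.univ ≠ 0 := by rw [dd_univ]; exact hBdet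
    have hpivB := dd_pivot_ne B Finset.univ hBuniv ({x', y'} : Finset {a // a ∈ T})
    rw [pivot_univ] at hpivB
    rw [← hpivB]
    have hBialt : IsAlt B⁻¹ := by
      rw [← pivot_univ]
      exact hBalt.pivot hBuniv
    rw [dd_pair _ (show x' ≠ y' from fun h => hxy h.symm)]
    have hcalc : B⁻¹ x' x' * B⁻¹ y' y' - B⁻¹ x' y' * B⁻¹ y' x'
        = B⁻¹ y' x' * B⁻¹ y' x' := by
      rw [hBialt.2 x', hBialt.2 y', hBialt.1 y' x']
      ring
    rw [hcalc]
    exact mul_ne_zero hB2 hB2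


def bord (A : Matrix m m K) (v : m → K) : Matrix (Option m) (Option m) K :=
  fun i j =>
    match i, j with
    | none, none => 0
    | none, some j' => v j'
    | some i', none => -(v i')
    | some i', some j' => A i' j'

lemma bord_alt {A : Matrix m m K} (hA : IsAlt A) (v : m → K) : IsAlt (bord A v) := by
  constructor
  · rintro (_ | i) (_ | j) <;> simp [bord] <;> exact hA.1 _ _
  · rintro (_ | i) <;> simp [bord, hA.2]

lemma det_add_vvt (B : Matrix m m K) (u : m → K) :
    (B + vecMulVec u u).det = B.det + (bord B u).det := by
  classical
  let A12 : Matrix Unit m K := Matrix.of fun _ j => u j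
  let A21 : Matrix m Unit K := Matrix.of fun i _ => -(u i)
  let F : Matrix (Unit ⊕ m) (Unit ⊕ m) K := fromBlocks 1 A12 A21 B
  let F0 : Matrix (Unit ⊕ m) (Unit ⊕ m) K := fromBlocks 0 A12 A21 B
  have h1 : F.det = (B + vecMulVec u u).det := by
    rw [show F.det = (B - A21 * A12).det from det_fromBlocks_one₁₁ A12 A21 B]
    congr 1
    ext i j
    simp [A21, A12, mul_apply, vecMulVec, sub_eq_add_neg]
  have h2 : F = updateRow F0 (Sum.inl ()) (Pi.single (Sum.inl ()) 1 + F0 (Sum.inl ())) := by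
    ext i j
    by_cases hi : i = Sum.inl ()
    · subst hi
      rw [updateRow_self]
      cases j with
      | inl j => simp [F, F0, fromBlocks, Pi.single_apply]
      | inr j => simp [F, F0, fromBlocks, Pi.single_apply, A12]
    · rw [updateRow_ne hi]
      cases i with
      | inl i => exact absurd (by cases i; rfl) hi
      | inr i => rfl
  have h3 : updateRow F0 (Sum.inl ()) (Pi.single (Sum.inl ()) 1) =
      fromBlocks 1 0 A21 B := by
    ext i j
    by_cases hi : i = Sum.inl ()
    · subst hi
      rw [updateRow_self]
      cases j with
      | inl j => cases j; simp [fromBlocks, Pi.single_apply, Matrix.one_apply]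
      | inr j => simp [fromBlocks, Pi.single_apply]
    · rw [updateRow_ne hi]
      cases i with
      | inl i => exact absurd (by cases i; rfl) hi
      | inr i => rfl
  have h4 : F.det = B.det + F0.det := by
    rw [h2, det_updateRow_add, h3, updateRow_eq_self, det_fromBlocks_zero₁₂, det_one, one_mul]
  have h5 : F0.det = (bord B u).det := by
    let e : Option m ≃ Unit ⊕ m :=
      { toFun := fun o => o.elim (Sum.inl ()) Sum.inr
        invFun := Sum.elim (fun _ => none) some
        left_inv := by rintro (_ | i) <;> rfl
        right_inv := by rintro (⟨⟩ | i) <;> rfl }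
    have : bord B u = F0.submatrix e e := by
      ext i j
      cases i <;> cases j <;> rfl
    rw [this, Matrix.det_submatrix_equiv_self]
  rw [← h1, h4, h5, add_comm]


def fs {m : Type*} : m ↪ Option m := ⟨some, fun _ _ h => Option.some_injective _ h⟩

lemma none_not_mem_map (I : Finset m) : none ∉ I.map (fs : m ↪ Option m) := by
  simp [Finset.mem_map, fs]

lemma dd_bord_map (A : Matrix m m K) (v : m → K) (I : Finset m) :
    dd (bord A v) (I.map fs) = dd A I := by
  classical
  have hb : Function.Bijective (fun x : {x // x ∈ I} =>
      (⟨some x.1, Finset.mem_map_of_mem fs x.2⟩ : {o // o ∈ I.map (fs : m ↪ Option m)})) := by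
    constructor
    · intro a b hab
      exact Subtype.ext (Option.some_injective _ (congrArg Subtype.val hab))
    · rintro ⟨o, ho⟩
      obtain ⟨x, hx, rfl⟩ := Finset.mem_map.mp ho
      exact ⟨⟨x, hx⟩, rfl⟩
  let e := Equiv.ofBijective _ hb
  have : psub A I = (psub (bord A v) (I.map fs)).submatrix e e := by
    ext i j; rfl
  rw [dd, dd, this, Matrix.det_submatrix_equiv_self]

lemma dd_bord_insert (A : Matrix m m K) (v : m → K) (I : Finset m) :
    dd (bord A v) (insert none (I.map fs)) = (bord (psub A I) (fun i => v i.1)).det := by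
  classical
  have hmemn : (none : Option m) ∈ insert none (I.map (fs : m ↪ Option m)) :=
    Finset.mem_insert_self _ _
  have hmems : ∀ x : {x // x ∈ I}, some x.1 ∈ insert none (I.map (fs : m ↪ Option m)) :=
    fun x => Finset.mem_insert_of_mem (Finset.mem_map_of_mem fs x.2)
  have hb : Function.Bijective (fun o : Option {x // x ∈ I} =>
      (o.elim ⟨none, hmemn⟩ (fun x => ⟨some x.1, hmems x⟩) :
        {o // o ∈ insert none (I.map (fs : m ↪ Option m))})) := by
    constructor
    · rintro (_ | a) (_ | b) hab
      · rfl
      · exact absurd (congrArg Subtype.val hab) (by simp)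
      · exact absurd (congrArg Subtype.val hab) (by simp)
      · have := Option.some_injective _ (congrArg Subtype.val hab)
        rw [Subtype.ext this]
    · rintro ⟨o, ho⟩
      rcases Finset.mem_insert.mp ho with h | h
      · subst h; exact ⟨none, rfl⟩
      · obtain ⟨x, hx, rfl⟩ := Finset.mem_map.mp h
        exact ⟨some ⟨x, hx⟩, rfl⟩
  let e := Equiv.ofBijective _ hb
  have : bord (psub A I) (fun i => v i.1)
      = (psub (bord A v) (insert none (I.map fs))).submatrix e e := by
    ext i j
    cases i <;> cases j <;> rfl
  rw [dd, this, Matrix.det_submatrix_equiv_self]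

lemma dd_split (A : Matrix m m K) (v : m → K) (I : Finset m) :
    dd (A + vecMulVec v v) I
      = dd (bord A v) (I.map fs) + dd (bord A v) (insert none (I.map fs)) := by
  have h0 : psub (A + vecMulVec v v) I
      = psub A I + vecMulVec (fun i => v i.1) (fun i => v i.1) := by
    ext i j
    simp [psub, vecMulVec, Matrix.add_apply]
  rw [dd, h0, det_add_vvt, dd_bord_map, dd_bord_insert]
  rfl

lemma dd_odd_zero {N : Matrix (Option m) (Option m) K} (hN : IsAlt N)
    {S : Finset (Option m)} (h : Odd S.card) : dd N S = 0 := by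
  apply (hN.psub S).det_eq_zero
  rwa [Fintype.card_coe]

lemma transfer {A : Matrix m m K} {v : m → K} (hA : IsAlt A) {S : Finset m}
    {W : Finset (Option m)}
    (hW : W = S.map fs ∨ W = insert none (S.map fs))
    (h : dd (bord A v) W ≠ 0) : dd (A + vecMulVec v v) S ≠ 0 := by
  have hcard : (S.map (fs : m ↪ Option m)).card = S.card := Finset.card_map _
  have hcard2 : (insert none (S.map (fs : m ↪ Option m))).card = S.card + 1 := by
    rw [Finset.card_insert_of_notMem (none_not_mem_map S), hcard]
  rw [dd_split A v S]
  rcases Nat.even_or_odd S.card with hE | hO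
  · have hz : dd (bord A v) (insert none (S.map fs)) = 0 := by
      apply dd_odd_zero (bord_alt hA v)
      rw [hcard2]
      exact Even.add_one hE
    rcases hW with rfl | rfl
    · rw [hz, add_zero]; exact h
    · exact absurd hz h
  · have hz : dd (bord A v) (S.map fs) = 0 := by
      apply dd_odd_zero (bord_alt hA v)
      rwa [hcard]
    rcases hW with rfl | rfl
    · exact absurd hz h
    · rw [hz, zero_add]; exact h


noncomputable def liftF (I : Finset m) : Finset (Option m) :=
  if Even I.card then I.map fs else insert none (I.map fs)

lemma dd_liftF {A : Matrix m m K} {v : m → K} (hA : IsAlt A) (I : Finset m) :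
    dd (A + vecMulVec v v) I = dd (bord A v) (liftF I) := by
  rw [dd_split, liftF]
  split_ifs with hE
  · rw [dd_odd_zero (bord_alt hA v) (S := insert none (I.map fs)) ?_, add_zero]
    rw [Finset.card_insert_of_notMem (none_not_mem_map I), Finset.card_map]
    exact Even.add_one hE
  · rw [dd_odd_zero (bord_alt hA v) (S := I.map fs) ?_, zero_add]
    rw [Finset.card_map]
    exact Nat.not_even_iff_odd.mp hE

lemma mem_liftF_some (I : Finset m) (x : m) : some x ∈ liftF I ↔ x ∈ I := by
  rw [liftF]
  split_ifs <;> simp [Finset.mem_insert, Finset.mem_map, fs] <;>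
    exact ⟨fun ⟨a, ha, h⟩ => Option.some_injective _ h ▸ ha, fun h => ⟨x, h, rfl⟩⟩

section helpers
variable {α : Type*} [DecidableEq α]

lemma insert_symmDiff_of_not_mem {a : α} (s : Finset α) {t : Finset α} (ht : a ∉ t) :
    (insert a s) ∆ t = insert a (s ∆ t) := by
  ext b
  by_cases hb : b = a
  · subst hb
    simp [Finset.mem_symmDiff, ht]
  · simp [Finset.mem_symmDiff, hb]

lemma insert_symmDiff_insert {a : α} {s t : Finset α} (hs : a ∉ s) (ht : a ∉ t) :
    (insert a s) ∆ (insert a t) = s ∆ t := by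
  ext b
  by_cases hb : b = a
  · subst hb
    simp [Finset.mem_symmDiff, hs, ht]
  · simp [Finset.mem_symmDiff, hb]
end helpers

lemma map_symmDiff' (s t : Finset m) :
    (s ∆ t).map (fs : m ↪ Option m) = s.map fs ∆ t.map fs := by
  rw [Finset.map_eq_image, Finset.map_eq_image, Finset.map_eq_image,
    Finset.image_symmDiff _ _ (fs : m ↪ Option m).injective]

lemma pair_some (x y : m) :
    ({some x, some y} : Finset (Option m)) = ({x, y} : Finset m).map fs := by
  rw [Finset.map_insert, Finset.map_singleton]
  rfl

lemma liftF_symmDiff_pair {I : Finset m} (x y : m) :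
    liftF I ∆ ({some x, some y} : Finset (Option m)) = (I ∆ {x, y}).map fs ∨
    liftF I ∆ ({some x, some y} : Finset (Option m))
      = insert none ((I ∆ {x, y}).map fs) := by
  rw [liftF, pair_some]
  split_ifs with hE
  · left
    rw [← map_symmDiff']
  · right
    rw [insert_symmDiff_of_not_mem _ (none_not_mem_map _), ← map_symmDiff']

lemma liftF_symmDiff_none {I : Finset m} (x : m) :
    liftF I ∆ ({some x, none} : Finset (Option m)) = (I ∆ {x}).map fs ∨
    liftF I ∆ ({some x, none} : Finset (Option m))
      = insert none ((I ∆ {x}).map fs) := by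
  have hp : ({some x, none} : Finset (Option m)) = insert none {some x} :=
    Finset.pair_comm _ _
  have hsx : ({some x} : Finset (Option m)) = ({x} : Finset m).map fs := by
    rw [Finset.map_singleton]; rfl
  rw [liftF, hp]
  split_ifs with hE
  · right
    rw [symmDiff_comm, insert_symmDiff_of_not_mem _ (none_not_mem_map _),
      symmDiff_comm, hsx, ← map_symmDiff']
  · left
    rw [insert_symmDiff_insert (none_not_mem_map _) (by simp), hsx, ← map_symmDiff']

lemma main_exchange {A : Matrix m m K} {v : m → K} (hA : IsAlt A) {I J : Finset m}
    (hI : dd (A + vecMulVec v v) I ≠ 0) (hJ : dd (A + vecMulVec v v) J ≠ 0)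
    {x : m} (hx : x ∈ I ∆ J) :
    ∃ y ∈ I ∆ J, dd (A + vecMulVec v v) (I ∆ {x, y}) ≠ 0 ∧
      dd (A + vecMulVec v v) (J ∆ {x, y}) ≠ 0 := by
  have hN : IsAlt (bord A v) := bord_alt hA v
  have hI' : dd (bord A v) (liftF I) ≠ 0 := by rw [← dd_liftF hA]; exact hI
  have hJ' : dd (bord A v) (liftF J) ≠ 0 := by rw [← dd_liftF hA]; exact hJ
  have hx' : some x ∈ liftF I ∆ liftF J := by
    rw [Finset.mem_symmDiff] at hx ⊢
    simp only [mem_liftF_some]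
    exact hx
  obtain ⟨y', hy'mem, hy'ne, h1, h2⟩ := core_exchange hN hI' hJ' hx'
  cases y' with
  | some y =>
    have hymem : y ∈ I ∆ J := by
      rw [Finset.mem_symmDiff] at hy'mem ⊢
      simpa only [mem_liftF_some] using hy'mem
    exact ⟨y, hymem, transfer hA (liftF_symmDiff_pair x y) h1,
      transfer hA (liftF_symmDiff_pair x y) h2⟩
  | none =>
    have hxx : ({x, x} : Finset m) = {x} := by simp
    refine ⟨x, hx, ?_, ?_⟩
    · rw [hxx]
      exact transfer hA (liftF_symmDiff_none x) h1
    · rw [hxx]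
      exact transfer hA (liftF_symmDiff_none x) h2


end DM

/-- for a skew-symmetric `A` and a vector `v` over a field, the set
system on `[n]` whose bases are the `I` with `(A + v vᵀ)[I]` nonsingular is a
strong Δ-matroid. -/
theorem stmt7 {n : ℕ} {K : Type*} [Field K]
    (A : Matrix (Fin n) (Fin n) K) (v : Fin n → K)
    (hskew : Aᵀ = -A) (hdiag : ∀ i, A i i = 0) :
    IsStrongDeltaMatroid (Finset.univ : Finset (Fin n))
      {I : Finset (Fin n) | (psub (A + Matrix.vecMulVec v v) I).det ≠ 0} := by
  classical
  have hA : DM.IsAlt A := by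
    refine ⟨fun i j => ?_, hdiag⟩
    have := congrFun (congrFun hskew i) j
    simpa [Matrix.transpose_apply, Matrix.neg_apply] using this
  have hstrong : ∀ b ∈ {I : Finset (Fin n) | (psub (A + Matrix.vecMulVec v v) I).det ≠ 0},
      ∀ b' ∈ {I : Finset (Fin n) | (psub (A + Matrix.vecMulVec v v) I).det ≠ 0},
      ∀ x ∈ b ∆ b', ∃ y ∈ b ∆ b',
        b ∆ ({x, y} : Finset (Fin n)) ∈
          {I : Finset (Fin n) | (psub (A + Matrix.vecMulVec v v) I).det ≠ 0} ∧
        b' ∆ ({x, y} : Finset (Fin n)) ∈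
          {I : Finset (Fin n) | (psub (A + Matrix.vecMulVec v v) I).det ≠ 0} := by
    intro b hb b' hb' x hx
    exact DM.main_exchange hA hb hb' hx
  refine ⟨⟨⟨∅, ?_⟩, fun b _ => Finset.subset_univ b, fun b hb b' hb' x hx => ?_⟩, hstrong⟩
  · show (psub (A + Matrix.vecMulVec v v) ∅).det ≠ 0
    have : IsEmpty {x // x ∈ (∅ : Finset (Fin n))} :=
      ⟨fun x => (Finset.notMem_empty x.1 x.2)⟩
    rw [Matrix.det_isEmpty]
    exact one_ne_zero
  · obtain ⟨y, hy, h1, _⟩ := hstrong b hb b' hb' x hx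
    exact ⟨y, hy, h1⟩
end

section
/- Every Δ-matroid representable over a finite field of characteristic two is strong. That is, if D = D(M) * X where M is a symmetric matrix over a finite field of characteristic two, D(M) is the Δ-matroid on the index set E of M whose bases are the subsets I with M[I] nonsingular, and * X denotes twisting by a set X (replacing each basis B by B △ X), then D satisfies the strong basis exchange property. -/
open Matrix Finset
open scoped symmDiff

section Aux
variable {m : Type*} [Fintype m] [DecidableEq m] {K : Type*} [Field K]


variable {m : Type*} [Fintype m] [DecidableEq m] {K : Type*} [Field K]

/-- equiv split -/
def eqv (P : Finset m) : (↥(Pᶜ) ⊕ ↥P) ≃ m where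
  toFun s := Sum.elim Subtype.val Subtype.val s
  invFun a := if h : a ∈ P then Sum.inr ⟨a, h⟩ else Sum.inl ⟨a, Finset.mem_compl.2 h⟩
  left_inv s := by
    rcases s with ⟨a, ha⟩ | ⟨a, ha⟩
    · simp [Finset.mem_compl.1 ha]
    · simp [ha]
  right_inv a := by by_cases h : a ∈ P <;> simp [h]

@[simp] lemma eqv_inl (P : Finset m) (i : ↥(Pᶜ)) : eqv P (Sum.inl i) = i.1 := rfl
@[simp] lemma eqv_inr (P : Finset m) (i : ↥P) : eqv P (Sum.inr i) = i.1 := rfl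

/-- column selection matrix -/
def colsel (M : Matrix m m K) (J : Finset m) : Matrix m m K :=
  fun i j => if j ∈ J then M i j else if i = j then 1 else 0

lemma det_colsel (M : Matrix m m K) (J : Finset m) :
    (colsel M J).det = (psub M J).det := by
  have h : (colsel M J).submatrix (eqv J) (eqv J) =
      fromBlocks 1 (((colsel M J).submatrix (eqv J) (eqv J)).toBlocks₁₂) 0 (psub M J) := by
    ext i j
    rcases i with i | i <;> rcases j with j | j
    · have hj := Finset.mem_compl.1 j.2
      simp only [submatrix_apply, fromBlocks_apply₁₁, eqv_inl, one_apply, colsel, if_neg hj]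
      by_cases h : i = j
      · subst h; simp [hj]
      · have h' : i.1 ≠ j.1 := fun h' => h (Subtype.ext h')
        simp [hj, h', h]
    · simp [fromBlocks, toBlocks₁₂]
    · have hj := Finset.mem_compl.1 j.2
      have : i.1 ≠ j.1 := fun h => hj (h ▸ i.2)
      simp [colsel, fromBlocks, hj, this]
    · simp [colsel, fromBlocks, psub, j.2]
  calc (colsel M J).det = ((colsel M J).submatrix (eqv J) (eqv J)).det :=
        (det_submatrix_equiv_self _ _).symm
    _ = (psub M J).det := by rw [h, det_fromBlocks_zero₂₁, det_one, one_mul]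

lemma jacobi (S : Matrix m m K) (hS : IsUnit S.det) (P : Finset m) :
    S.det * (psub S⁻¹ P).det = (psub S Pᶜ).det := by
  set e := eqv P
  set U := S.submatrix e e with hU
  set V := (S⁻¹).submatrix e e with hV
  have hUV : U * V = 1 := by
    rw [hU, hV, submatrix_mul_equiv, Matrix.mul_nonsing_inv _ hS, submatrix_one_equiv]
  -- blocks
  set A := U.toBlocks₁₁; set Bb := U.toBlocks₁₂; set Cc := U.toBlocks₂₁; set D := U.toBlocks₂₂
  set A' := V.toBlocks₁₁; set B' := V.toBlocks₁₂; set C' := V.toBlocks₂₁; set D' := V.toBlocks₂₂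
  have hUb : U = fromBlocks A Bb Cc D := (fromBlocks_toBlocks U).symm
  have hVb : V = fromBlocks A' B' C' D' := (fromBlocks_toBlocks V).symm
  have hmul : fromBlocks (A*A' + Bb*C') (A*B' + Bb*D') (Cc*A' + D*C') (Cc*B' + D*D')
      = fromBlocks 1 0 0 1 := by
    rw [← fromBlocks_multiply, ← hUb, ← hVb, hUV, fromBlocks_one]
  have h12 : A*B' + Bb*D' = 0 := by
    have := congrArg Matrix.toBlocks₁₂ hmul
    rw [toBlocks_fromBlocks₁₂, toBlocks_fromBlocks₁₂] at this
    exact this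
  have h22 : Cc*B' + D*D' = 1 := by
    have := congrArg Matrix.toBlocks₂₂ hmul
    rw [toBlocks_fromBlocks₂₂, toBlocks_fromBlocks₂₂] at this
    exact this
  have key : U * fromBlocks 1 B' 0 D' = fromBlocks A 0 Cc 1 := by
    rw [hUb, fromBlocks_multiply]
    congr 1 <;> simp [h12, h22]
  have hdet := congrArg Matrix.det key
  rw [det_mul, det_fromBlocks_zero₂₁, det_fromBlocks_zero₁₂, det_one, one_mul, det_one, mul_one]
    at hdet
  have hA : A = psub S Pᶜ := by ext i j; rfl
  have hD' : D' = psub S⁻¹ P := by ext i j; rfl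
  have hUdet : U.det = S.det := det_submatrix_equiv_self _ _
  rw [← hA, ← hD', ← hUdet, hdet]


lemma sum_sym_char2 [CharP K 2] (f : m → m → K) (hf : ∀ y z, f y z = f z y) :
    ∑ y, ∑ z, f y z = ∑ y, f y y := by
  classical
  rw [← Finset.sum_product']
  have hsplit := Finset.sum_filter_add_sum_filter_not (Finset.univ ×ˢ Finset.univ)
    (fun p : m × m => p.1 = p.2) (fun p => f p.1 p.2)
  have hdiag : ∑ p ∈ (Finset.univ ×ˢ Finset.univ).filter (fun p : m × m => p.1 = p.2),
      f p.1 p.2 = ∑ y, f y y := by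
    refine Finset.sum_bij' (fun p _ => p.1) (fun y _ => (y, y)) ?_ ?_ ?_ ?_ ?_
    · intro p hp; exact Finset.mem_univ _
    · intro y hy; simp
    · intro p hp
      simp only [Finset.mem_filter] at hp
      exact Prod.ext rfl hp.2
    · intro y hy; rfl
    · intro p hp
      simp only [Finset.mem_filter] at hp
      rw [← hp.2]
  have hoff : ∑ p ∈ (Finset.univ ×ˢ Finset.univ).filter (fun p : m × m => ¬ p.1 = p.2),
      f p.1 p.2 = 0 := by
    apply Finset.sum_involution (fun p _ => (p.2, p.1))
    · intro p hp
      rw [hf p.2 p.1]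
      exact CharTwo.add_self_eq_zero _
    · intro p hp _
      simp only [Finset.mem_filter] at hp
      intro h
      rw [Prod.ext_iff] at h
      exact hp.2 h.1.symm
    · intro p hp
      simp only [Finset.mem_filter, Finset.mem_product] at hp ⊢
      exact ⟨⟨Finset.mem_univ _, Finset.mem_univ _⟩, fun h => hp.2 h.symm⟩
    · intro p hp; rfl
  rw [← hsplit, hdiag, hoff, add_zero]

/-- key search lemma -/
lemma search [CharP K 2] (S T : Matrix m m K) (hS : Sᵀ = S) (hT : Tᵀ = T)
    (hST : S * T = 1) (hTS : T * S = 1) (x : m) (hxx : S x x * T x x = 0) :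
    ∃ y, y ≠ x ∧ S x x * S y y - S x y * S y x ≠ 0 ∧ T x y ≠ 0 := by
  have hSsym : ∀ a b, S a b = S b a := fun a b => by
    have := congrFun (congrFun hS b) a
    simpa using this
  have hTsym : ∀ a b, T a b = T b a := fun a b => by
    have := congrFun (congrFun hT b) a
    simpa using this
  -- claim 1 : ∑ y, S y y * (T x y * T y x) = T x x
  have hTST : ∑ y, S y y * (T x y * T y x) = T x x := by
    have h1 : ∑ y, ∑ z, (T x y * S y z * T z x) = T x x := by
      have heach : ∀ y, ∑ z, (T x y * S y z * T z x) = T x y * ((S * T) y x) := by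
        intro y
        rw [Matrix.mul_apply, Finset.mul_sum]
        refine Finset.sum_congr rfl (fun z _ => ?_)
        rw [hTsym z x]; ring
      rw [Finset.sum_congr rfl (fun y _ => heach y), hST]
      simp only [Matrix.one_apply]
      simp [hTsym x]
    rw [← h1, sum_sym_char2 (fun y z => T x y * S y z * T z x)
      (fun y z => by
        show T x y * S y z * T z x = T x z * S z y * T y x
        rw [hSsym y z, hTsym x y, hTsym x z]; ring)]
    refine Finset.sum_congr rfl (fun y _ => ?_)
    rw [hTsym x y]; ring
  -- claim 2 : ∑ y, (S x y * S y x) * (T x y * T y x) = 1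
  have hsq : ∑ y, (S x y * S y x) * (T x y * T y x) = 1 := by
    have hh : ∑ y, T x y * S y x = 1 := by
      have h0 : ∑ y, T x y * S y x = (T * S) x x := (Matrix.mul_apply).symm
      rw [h0, hTS, Matrix.one_apply_eq]
    have hs := sum_sym_char2 (fun y z => (T x y * S y x) * (T x z * S z x))
      (fun y z => by show (T x y * S y x) * (T x z * S z x) = _; ring)
    beta_reduce at hs
    rw [← Finset.sum_mul_sum, hh, one_mul] at hs
    rw [hs]
    refine Finset.sum_congr rfl (fun y _ => ?_)
    rw [hSsym x y, hTsym x y]; ring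
  -- total
  have htot : ∑ y, (S x x * S y y - S x y * S y x) * (T x y * T y x) = 1 := by
    have heach : ∀ y, (S x x * S y y - S x y * S y x) * (T x y * T y x)
        = S x x * (S y y * (T x y * T y x)) - (S x y * S y x) * (T x y * T y x) := by
      intro y; ring
    rw [Finset.sum_congr rfl (fun y _ => heach y), Finset.sum_sub_distrib, ← Finset.mul_sum,
      hTST, hsq, hxx, zero_sub, CharTwo.neg_eq]
  have hex : ∃ y, (S x x * S y y - S x y * S y x) * (T x y * T y x) ≠ 0 := by
    by_contra h
    push_neg at h
    rw [Finset.sum_congr rfl (fun y _ => h y)] at htot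
    simp at htot
  obtain ⟨y, hy⟩ := hex
  have h1 : S x x * S y y - S x y * S y x ≠ 0 := fun h => hy (by rw [h, zero_mul])
  have h2 : T x y ≠ 0 := fun h => hy (by rw [h, zero_mul, mul_zero])
  refine ⟨y, ?_, h1, h2⟩
  rintro rfl
  exact h1 (sub_self _)


lemma det_psub_empty (M : Matrix m m K) : (psub M ∅).det = 1 :=
  Matrix.det_isEmpty

lemma det_psub_singleton (M : Matrix m m K) (x : m) :
    (psub M {x}).det = M x x := by
  letI : Unique (↥({x} : Finset m)) :=
    ⟨⟨⟨x, Finset.mem_singleton_self x⟩⟩, fun z => Subtype.ext (Finset.mem_singleton.1 z.2)⟩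
  rw [Matrix.det_unique]
  rfl

lemma det_psub_pair (M : Matrix m m K) {x y : m} (hxy : x ≠ y) :
    (psub M {x, y}).det = M x x * M y y - M x y * M y x := by
  have hx : x ∈ ({x, y} : Finset m) := by simp
  have hy : y ∈ ({x, y} : Finset m) := by simp
  let e : Fin 2 ≃ ↥({x, y} : Finset m) :=
    { toFun := fun i => if i = 0 then ⟨x, hx⟩ else ⟨y, hy⟩
      invFun := fun z => if z.1 = x then 0 else 1
      left_inv := by
        intro i
        fin_cases i <;> simp [hxy.symm]
      right_inv := by
        rintro ⟨z, hz⟩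
        rcases Finset.mem_insert.1 hz with rfl | hz
        · simp
        · rw [Finset.mem_singleton] at hz
          subst hz
          simp [hxy.symm] }
  rw [← Matrix.det_submatrix_equiv_self e, Matrix.det_fin_two]
  simp [e, psub]

/-- relating psub of psub to psub of the mapped set -/
lemma det_psub_psub (M : Matrix m m K) (C : Finset m) (Q : Finset ↥C) :
    (psub (psub M C) Q).det = (psub M (Q.map (Function.Embedding.subtype _))).det := by
  let R := Q.map (Function.Embedding.subtype _)
  have hmem : ∀ a : ↥R, a.1 ∈ C := by
    rintro ⟨a, ha⟩
    obtain ⟨z, hz, rfl⟩ := Finset.mem_map.1 ha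
    exact z.2
  have hmem2 : ∀ a : ↥R, (⟨a.1, hmem a⟩ : ↥C) ∈ Q := by
    rintro ⟨a, ha⟩
    obtain ⟨z, hz, rfl⟩ := Finset.mem_map.1 ha
    simpa using hz
  let e : ↥R ≃ ↥Q :=
    { toFun := fun a => ⟨⟨a.1, hmem a⟩, hmem2 a⟩
      invFun := fun z => ⟨z.1.1, Finset.mem_map.2 ⟨z.1, z.2, rfl⟩⟩
      left_inv := fun a => rfl
      right_inv := fun z => rfl }
  rw [← Matrix.det_submatrix_equiv_self e]
  rfl
section T4
variable {m : Type*} [Fintype m] [DecidableEq m] {K : Type*} [Field K]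

/-- the exchange pair lemma: for inverse symmetric pair, find y making both 2x2 minors invertible -/
lemma exch_pair [CharP K 2] (S : Matrix m m K) (hS : Sᵀ = S) (hdet : S.det ≠ 0) (x : m) :
    ∃ y, (psub S ({x, y} : Finset m)).det ≠ 0 ∧ (psub S⁻¹ ({x, y} : Finset m)).det ≠ 0 := by
  set T := S⁻¹ with hTdef
  have hunit : IsUnit S.det := isUnit_iff_ne_zero.2 hdet
  have hST : S * T = 1 := Matrix.mul_nonsing_inv _ hunit
  have hTS : T * S = 1 := Matrix.nonsing_inv_mul _ hunit
  have hT : Tᵀ = T := by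
    rw [hTdef, Matrix.transpose_nonsing_inv, hS]
  have hSsym : ∀ a b, S a b = S b a := fun a b => by
    have := congrFun (congrFun hS b) a
    simpa using this
  have hTsym : ∀ a b, T a b = T b a := fun a b => by
    have := congrFun (congrFun hT b) a
    simpa using this
  by_cases hxx : S x x * T x x = 0
  · by_cases hTxx : T x x = 0
    · -- use search with (S, T)
      obtain ⟨y, hyx, h1, h2⟩ := search S T hS hT hST hTS x hxx
      refine ⟨y, ?_, ?_⟩
      · rw [det_psub_pair S (fun h => hyx h.symm)]
        exact h1
      · rw [det_psub_pair T (fun h => hyx h.symm)]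
        rw [hTxx, zero_mul, zero_sub, CharTwo.neg_eq]
        intro h
        rcases mul_eq_zero.1 h with h | h
        · exact h2 h
        · exact h2 (by rw [hTsym x y]; exact h)
    · -- then S x x = 0 ; use search with (T, S)
      have hSxx : S x x = 0 := by
        rcases mul_eq_zero.1 hxx with h | h
        · exact h
        · exact absurd h hTxx
      obtain ⟨y, hyx, h1, h2⟩ := search T S hT hS hTS hST x
        (by rw [mul_comm] at hxx; exact hxx)
      refine ⟨y, ?_, ?_⟩
      · rw [det_psub_pair S (fun h => hyx h.symm)]
        rw [hSxx, zero_mul, zero_sub, CharTwo.neg_eq]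
        intro h
        rcases mul_eq_zero.1 h with h | h
        · exact h2 h
        · exact h2 (by rw [hSsym x y]; exact h)
      · rw [det_psub_pair T (fun h => hyx h.symm)]
        exact h1
  · -- take y = x
    refine ⟨x, ?_, ?_⟩
    · have : ({x, x} : Finset m) = {x} := by simp
      rw [this, det_psub_singleton]
      intro h; rw [h, zero_mul] at hxx; exact hxx rfl
    · have : ({x, x} : Finset m) = {x} := by simp
      rw [this, det_psub_singleton]
      intro h; rw [h, mul_zero] at hxx; exact hxx rfl
end T4
section T5
variable {m : Type*} [Fintype m] [DecidableEq m] {K : Type*} [Field K]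

/-- core lemma: exchange from the empty side -/
lemma core [CharP K 2] (N : Matrix m m K) (hN : Nᵀ = N) (C : Finset m)
    (hC : (psub N C).det ≠ 0) {x : m} (hx : x ∈ C) :
    ∃ y ∈ C, (psub N ({x, y} : Finset m)).det ≠ 0 ∧
      (psub N (C \ {x, y})).det ≠ 0 := by
  set S := psub N C with hSdef
  have hS : Sᵀ = S := by
    ext i j
    exact congrFun (congrFun hN i.1) j.1
  set x' : ↥C := ⟨x, hx⟩ with hx'
  obtain ⟨y', h1, h2⟩ := exch_pair S hS hC x'
  refine ⟨y'.1, y'.2, ?_, ?_⟩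
  · have hmap : ({x', y'} : Finset ↥C).map (Function.Embedding.subtype _)
        = ({x, y'.1} : Finset m) := by
      simp [Finset.map_insert, Finset.map_singleton, hx']
    have := det_psub_psub N C ({x', y'} : Finset ↥C)
    rw [hmap] at this
    rw [← this]
    exact h1
  · have hunit : IsUnit S.det := isUnit_iff_ne_zero.2 hC
    have hj := jacobi S hunit ({x', y'} : Finset ↥C)
    have hcompl : (psub S ({x', y'}ᶜ : Finset ↥C)).det ≠ 0 := by
      rw [← hj]
      exact mul_ne_zero hC h2
    have hmap : (({x', y'}ᶜ : Finset ↥C)).map (Function.Embedding.subtype _)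
        = C \ {x, y'.1} := by
      ext a
      simp only [Finset.mem_map, Finset.mem_compl, Finset.mem_insert, Finset.mem_singleton,
        Function.Embedding.coe_subtype, Finset.mem_sdiff]
      constructor
      · rintro ⟨z, hz, rfl⟩
        refine ⟨z.2, ?_⟩
        intro h
        apply hz
        rcases h with h | h
        · left; exact Subtype.ext h
        · right; exact Subtype.ext h
      · rintro ⟨ha, hne⟩
        refine ⟨⟨a, ha⟩, ?_, rfl⟩
        intro h
        apply hne
        rcases h with h | h
        · left; exact congrArg Subtype.val h
        · right; exact congrArg Subtype.val h
    have := det_psub_psub N C (({x', y'}ᶜ : Finset ↥C))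
    rw [hmap] at this
    rw [← this]
    exact hcompl
end T5
section T6
variable {m : Type*} [Fintype m] [DecidableEq m] {K : Type*} [Field K]

lemma mul_colsel_apply (P N : Matrix m m K) (J : Finset m) (i j : m) :
    (P * colsel N J) i j = if j ∈ J then (P * N) i j else P i j := by
  rw [Matrix.mul_apply]
  by_cases hj : j ∈ J
  · rw [if_pos hj, Matrix.mul_apply]
    refine Finset.sum_congr rfl (fun k _ => ?_)
    rw [colsel, if_pos hj]
  · rw [if_neg hj]
    have : ∀ k, P i k * colsel N J k j = P i k * (if k = j then 1 else 0) := by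
      intro k; rw [colsel, if_neg hj]
    rw [Finset.sum_congr rfl (fun k _ => this k)]
    simp [mul_ite]

lemma colsel_pivot (M : Matrix m m K) (I : Finset m) (hI : IsUnit (colsel M I).det)
    (J : Finset m) :
    colsel M (J ∆ I) = colsel M I * colsel ((colsel M I)⁻¹ * colsel M Iᶜ) J := by
  set P := colsel M I
  set Q := colsel M Iᶜ
  have hPQ : P * (P⁻¹ * Q) = Q := Matrix.mul_nonsing_inv_cancel_left _ _ hI
  ext i j
  rw [mul_colsel_apply, hPQ]
  by_cases hj : j ∈ J <;> by_cases hj' : j ∈ I <;>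
    simp [colsel, P, Q, Finset.mem_symmDiff, hj, hj']

lemma colsel_mul_transpose_apply (M : Matrix m m K) (hM : Mᵀ = M) (A : Finset m) (i j : m) :
    (colsel M A * (colsel M Aᶜ)ᵀ) i j
      = (if j ∈ A then M i j else 0) + (if i ∈ A then 0 else M j i) := by
  rw [Matrix.mul_apply]
  have heach : ∀ k, colsel M A i k * (colsel M Aᶜ)ᵀ k j
      = (if j = k then (if k ∈ A then M i k else 0) else 0)
        + (if i = k then (if k ∈ A then 0 else M j k) else 0) := by
    intro k
    rw [Matrix.transpose_apply]
    simp only [colsel, Finset.mem_compl]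
    by_cases hk : k ∈ A
    · by_cases hjk : j = k <;> simp [hk, hjk]
    · by_cases hik : i = k <;> simp [hk, hik, mul_comm]
  rw [Finset.sum_congr rfl (fun k _ => heach k), Finset.sum_add_distrib,
    Finset.sum_ite_eq Finset.univ j (fun k => if k ∈ A then M i k else 0),
    Finset.sum_ite_eq Finset.univ i (fun k => if k ∈ A then 0 else M j k)]
  simp

lemma pivot_symm [CharP K 2] (M : Matrix m m K) (hM : Mᵀ = M) (I : Finset m)
    (hI : IsUnit (colsel M I).det) :
    ((colsel M I)⁻¹ * colsel M Iᶜ)ᵀ = (colsel M I)⁻¹ * colsel M Iᶜ := by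
  set P := colsel M I with hPdef
  set Q := colsel M Iᶜ with hQdef
  have hMsym : ∀ a b, M a b = M b a := fun a b => by
    have := congrFun (congrFun hM b) a
    simpa using this
  have hsym : P * Qᵀ = Q * Pᵀ := by
    ext i j
    have h1 := colsel_mul_transpose_apply M hM I i j
    have h2 := colsel_mul_transpose_apply M hM Iᶜ i j
    rw [compl_compl] at h2
    rw [hPdef, hQdef, h1]
    show _ = (Q * Pᵀ) i j
    rw [hQdef, hPdef, h2]
    by_cases hi : i ∈ I <;> by_cases hj : j ∈ I <;>
      simp [hi, hj, Finset.mem_compl, hMsym i j, CharTwo.add_self_eq_zero]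
  have hPT : IsUnit (Pᵀ).det := by rwa [Matrix.det_transpose]
  calc (P⁻¹ * Q)ᵀ = Qᵀ * (P⁻¹)ᵀ := Matrix.transpose_mul _ _
    _ = Qᵀ * (Pᵀ)⁻¹ := by rw [Matrix.transpose_nonsing_inv]
    _ = (P⁻¹ * (P * Qᵀ)) * (Pᵀ)⁻¹ :=
        congrArg (fun Z => Z * (Pᵀ)⁻¹) (Matrix.nonsing_inv_mul_cancel_left P Qᵀ hI).symm
    _ = (P⁻¹ * (Q * Pᵀ)) * (Pᵀ)⁻¹ := by rw [hsym]
    _ = P⁻¹ * (Q * (Pᵀ * (Pᵀ)⁻¹)) := by rw [Matrix.mul_assoc, Matrix.mul_assoc]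
    _ = P⁻¹ * Q := by rw [Matrix.mul_nonsing_inv _ hPT, Matrix.mul_one]

lemma pivot_feas (M : Matrix m m K) (I : Finset m) (hI : (psub M I).det ≠ 0) (J : Finset m) :
    (psub ((colsel M I)⁻¹ * colsel M Iᶜ) J).det ≠ 0 ↔ (psub M (J ∆ I)).det ≠ 0 := by
  have hPd : (colsel M I).det ≠ 0 := by rwa [det_colsel]
  have hPu : IsUnit (colsel M I).det := isUnit_iff_ne_zero.2 hPd
  have h := colsel_pivot M I hPu J
  have hd := congrArg Matrix.det h
  rw [Matrix.det_mul, det_colsel, det_colsel, det_colsel] at hd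
  constructor
  · intro hne
    rw [hd]
    exact mul_ne_zero hI hne
  · intro hne h0
    rw [hd, h0, mul_zero] at hne
    exact hne rfl
  
lemma main_exchange [CharP K 2] (M : Matrix m m K) (hM : Mᵀ = M)
    {I I' : Finset m} (hI : (psub M I).det ≠ 0) (hI' : (psub M I').det ≠ 0)
    {x : m} (hx : x ∈ I ∆ I') :
    ∃ y ∈ I ∆ I', (psub M (I ∆ ({x, y} : Finset m))).det ≠ 0 ∧
      (psub M (I' ∆ ({x, y} : Finset m))).det ≠ 0 := by
  have hPd : (colsel M I).det ≠ 0 := by rwa [det_colsel]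
  have hPu : IsUnit (colsel M I).det := isUnit_iff_ne_zero.2 hPd
  set N := (colsel M I)⁻¹ * colsel M Iᶜ with hNdef
  have hNs : Nᵀ = N := pivot_symm M hM I hPu
  set C := I ∆ I' with hCdef
  have hCI : C ∆ I = I' := by
    rw [hCdef, symmDiff_comm I I', symmDiff_symmDiff_cancel_right]
  have hCfeas : (psub N C).det ≠ 0 :=
    (pivot_feas M I hI C).2 (by rw [hCI]; exact hI')
  obtain ⟨y, hyC, h1, h2⟩ := core N hNs C hCfeas hx
  refine ⟨y, hyC, ?_, ?_⟩
  · have h := (pivot_feas M I hI ({x, y} : Finset m)).1 h1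
    rwa [symmDiff_comm] at h
  · have hsub : ({x, y} : Finset m) ⊆ C := Finset.insert_subset hx (Finset.singleton_subset_iff.2 hyC)
    have hsd : C \ ({x, y} : Finset m) = C ∆ ({x, y} : Finset m) := by
      exact (symmDiff_of_ge hsub).symm
    rw [hsd] at h2
    have htrans : (C ∆ ({x, y} : Finset m)) ∆ I = I' ∆ ({x, y} : Finset m) := by
      rw [symmDiff_comm C ({x, y} : Finset m), symmDiff_assoc, hCI, symmDiff_comm]
    have h := (pivot_feas M I hI (C ∆ ({x, y} : Finset m))).1 h2
    rwa [htrans] at h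
end T6

end Aux

/-- every Δ-matroid representable over a finite field of characteristic
two — i.e. of the form `D(M) * X` with `M` symmetric — is strong. -/
theorem stmt8 {n : ℕ} {K : Type*} [Field K] [Fintype K] [CharP K 2]
    (M : Matrix (Fin n) (Fin n) K) (hM : Mᵀ = M) (X : Finset (Fin n)) :
    IsStrongDeltaMatroid (Finset.univ : Finset (Fin n))
      {J : Finset (Fin n) | ∃ I : Finset (Fin n), (psub M I).det ≠ 0 ∧ J = I ∆ X} := by

  set B : Set (Finset (Fin n)) :=
    {J : Finset (Fin n) | ∃ I : Finset (Fin n), (psub M I).det ≠ 0 ∧ J = I ∆ X} with hB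
  have hstrong : ∀ b ∈ B, ∀ b' ∈ B, ∀ x ∈ b ∆ b', ∃ y ∈ b ∆ b',
      b ∆ ({x, y} : Finset (Fin n)) ∈ B ∧ b' ∆ ({x, y} : Finset (Fin n)) ∈ B := by
    rintro b ⟨I, hI, rfl⟩ b' ⟨I', hI', rfl⟩ x hx
    have hbb' : (I ∆ X) ∆ (I' ∆ X) = I ∆ I' := by
      rw [symmDiff_symmDiff_symmDiff_comm, symmDiff_self, symmDiff_bot]
    rw [hbb'] at hx
    obtain ⟨y, hy, h1, h2⟩ := main_exchange M hM hI hI' hx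
    refine ⟨y, by rwa [hbb'], ?_, ?_⟩
    · refine ⟨I ∆ ({x, y} : Finset (Fin n)), h1, ?_⟩
      rw [symmDiff_assoc, symmDiff_comm X ({x, y} : Finset (Fin n)), ← symmDiff_assoc]
    · refine ⟨I' ∆ ({x, y} : Finset (Fin n)), h2, ?_⟩
      rw [symmDiff_assoc, symmDiff_comm X ({x, y} : Finset (Fin n)), ← symmDiff_assoc]
  refine ⟨⟨⟨X, ∅, ?_, ?_⟩, fun b _ => b.subset_univ, ?_⟩, hstrong⟩
  · rw [det_psub_empty]; exact one_ne_zero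
  · rw [← Finset.bot_eq_empty, bot_symmDiff]
  · intro b hb b' hb' x hx
    obtain ⟨y, hy, h1, _⟩ := hstrong b hb b' hb' x hx
    exact ⟨y, hy, h1⟩
end
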